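/- For every natural number k ≥ 1 there exists a graph G with χ_ed(G) − χ_d(G) = k; in particular, the complete bipartite graph K_{2, 3k+1} satisfies χ_d = 2 and χ_ed = k + 2. -/

import Mathlib

open SimpleGraph Finset

/-- A coloring `c` of the vertices of `G` with exactly `k` colors is an
*equitable dominator coloring* if it is proper, every vertex dominates some
color class (every vertex of that class lies in its closed neighborhood),
and any two color classes differ in size by at most one. -/
def IsEquitableDominatorColoring {V : Type*} [Fintype V] (G : SimpleGraph V)
    (k : ℕ) (c : V → Fin k) : Prop :=
  Function.Surjective c ∧
  (∀ ⦃u v : V⦄, G.Adj u v → c u ≠ c v) ∧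
  (∀ v : V, ∃ i : Fin k, ∀ u : V, c u = i → u = v ∨ G.Adj v u) ∧
  (∀ i j : Fin k,
    (Finset.univ.filter fun v => c v = i).card ≤
      (Finset.univ.filter fun v => c v = j).card + 1)

/-- The equitable dominator chromatic number `χ_ed`. -/
noncomputable def edChromaticNumber {V : Type*} [Fintype V] (G : SimpleGraph V) : ℕ :=
  sInf {k | ∃ c : V → Fin k, IsEquitableDominatorColoring G k c}

/-- A *dominator coloring* with exactly `k` colors: a proper coloring in which
every vertex dominates some color class. -/
def IsDominatorColoring {V : Type*} [Fintype V] (G : SimpleGraph V)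
    (k : ℕ) (c : V → Fin k) : Prop :=
  Function.Surjective c ∧
  (∀ ⦃u v : V⦄, G.Adj u v → c u ≠ c v) ∧
  (∀ v : V, ∃ i : Fin k, ∀ u : V, c u = i → u = v ∨ G.Adj v u)

/-- The dominator chromatic number `χ_d`. -/
noncomputable def domChromaticNumber {V : Type*} [Fintype V] (G : SimpleGraph V) : ℕ :=
  sInf {k | ∃ c : V → Fin k, IsDominatorColoring G k c}

/-- the coloring of `K_{2,3k+1}` with `k+2` colors -/
def cED (k : ℕ) : (Fin 2 ⊕ Fin (3 * k + 1)) → Fin (k + 2) :=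
  Sum.elim (fun _ => 0) (fun b => ⟨b.val % (k + 1) + 1, by
    have := Nat.mod_lt b.val (show 0 < k + 1 by omega); omega⟩)

lemma cED_card_lb (k : ℕ) (hk : 1 ≤ k) (i : Fin (k + 2)) :
    2 ≤ (Finset.univ.filter fun v => cED k v = i).card := by
  rcases Nat.eq_zero_or_pos i.val with h0 | hpos
  · have hsub : ({Sum.inl 0, Sum.inl 1} : Finset (Fin 2 ⊕ Fin (3 * k + 1))) ⊆
        Finset.univ.filter fun v => cED k v = i := by
      intro u hu
      simp only [Finset.mem_insert, Finset.mem_singleton] at hu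
      rcases hu with rfl | rfl <;>
        · simp only [Finset.mem_filter, Finset.mem_univ, true_and, cED, Sum.elim_inl]
          exact Finset.mem_filter.mpr ⟨Finset.mem_univ _, Fin.ext (by simp [h0])⟩
    have := Finset.card_le_card hsub
    simpa using this
  · have hrk : i.val - 1 ≤ k := by have := i.isLt; omega
    have hb1 : i.val - 1 < 3 * k + 1 := by omega
    have hb2 : (i.val - 1) + (k + 1) < 3 * k + 1 := by omega
    have hm1 : (i.val - 1) % (k + 1) + 1 = i.val := by
      rw [Nat.mod_eq_of_lt (by omega)]; omega
    have hm2 : ((i.val - 1) + (k + 1)) % (k + 1) + 1 = i.val := by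
      rw [Nat.add_mod_right, Nat.mod_eq_of_lt (by omega)]; omega
    have hsub : ({Sum.inr ⟨i.val - 1, hb1⟩, Sum.inr ⟨(i.val - 1) + (k + 1), hb2⟩} :
        Finset (Fin 2 ⊕ Fin (3 * k + 1))) ⊆ Finset.univ.filter fun v => cED k v = i := by
      intro u hu
      simp only [Finset.mem_insert, Finset.mem_singleton] at hu
      rcases hu with rfl | rfl
      · simp only [Finset.mem_filter, Finset.mem_univ, true_and, cED, Sum.elim_inr]
        simpa [Fin.ext_iff] using hm1
      · simp only [Finset.mem_filter, Finset.mem_univ, true_and, cED, Sum.elim_inr]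
        simpa [Fin.ext_iff] using hm2
    have hcard : ({Sum.inr ⟨i.val - 1, hb1⟩, Sum.inr ⟨(i.val - 1) + (k + 1), hb2⟩} :
        Finset (Fin 2 ⊕ Fin (3 * k + 1))).card = 2 := by
      rw [Finset.card_insert_of_notMem (by simp [Fin.ext_iff]), Finset.card_singleton]
    have := Finset.card_le_card hsub
    omega

lemma cED_card_ub (k : ℕ) (hk : 1 ≤ k) (i : Fin (k + 2)) :
    (Finset.univ.filter fun v => cED k v = i).card ≤ 3 := by
  rcases Nat.eq_zero_or_pos i.val with h0 | hpos
  · have hsub : (Finset.univ.filter fun v => cED k v = i) ⊆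
        ({Sum.inl 0, Sum.inl 1} : Finset (Fin 2 ⊕ Fin (3 * k + 1))) := by
      intro u hu
      simp only [Finset.mem_filter] at hu
      rcases u with a | b
      · fin_cases a <;> simp
      · exfalso
        have : cED k (Sum.inr b) = i := hu.2
        have := congrArg Fin.val this
        simp [cED] at this
        omega
    have := Finset.card_le_card hsub
    have h2 : ({Sum.inl 0, Sum.inl 1} : Finset (Fin 2 ⊕ Fin (3 * k + 1))).card ≤ 2 := by
      apply le_trans (Finset.card_insert_le _ _); simp
    omega
  · -- class is image of a mod class; bound via division map
    classical
    have hsub : (Finset.univ.filter fun v => cED k v = i) ⊆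
        (Finset.univ.filter fun b : Fin (3 * k + 1) =>
          b.val % (k + 1) + 1 = i.val).image Sum.inr := by
      intro u hu
      simp only [Finset.mem_filter, Finset.mem_univ, true_and] at hu
      rcases u with a | b
      · exfalso
        have := congrArg Fin.val hu
        simp [cED] at this
        omega
      · simp only [Finset.mem_image, Finset.mem_filter, Finset.mem_univ, true_and]
        exact ⟨b, congrArg Fin.val hu, rfl⟩
    refine le_trans (Finset.card_le_card hsub) ?_
    refine le_trans (Finset.card_image_le) ?_
    have : (Finset.univ.filter fun b : Fin (3 * k + 1) =>
        b.val % (k + 1) + 1 = i.val).card ≤ (Finset.range 3).card := by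
      apply Finset.card_le_card_of_injOn (fun b => b.val / (k + 1))
      · intro b hb
        simp only [Finset.mem_coe, Finset.mem_range]
        have : b.val < 3 * (k + 1) := by have := b.isLt; omega
        exact Nat.div_lt_of_lt_mul (by omega)
      · intro b1 h1 b2 h2 heq
        simp only [Finset.mem_coe, Finset.mem_filter] at h1 h2
        have e1 := Nat.div_add_mod b1.val (k + 1)
        have e2 := Nat.div_add_mod b2.val (k + 1)
        have hd : b1.val / (k + 1) = b2.val / (k + 1) := heq
        have hm : b1.val % (k + 1) = b2.val % (k + 1) := by omega
        have : b1.val = b2.val := by rw [← e1, ← e2, hd, hm]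
        exact Fin.ext this
    simpa using this

lemma cED_is_edc (k : ℕ) (hk : 1 ≤ k) :
    IsEquitableDominatorColoring (completeBipartiteGraph (Fin 2) (Fin (3 * k + 1)))
      (k + 2) (cED k) := by
  refine ⟨?_, ?_, ?_, ?_⟩
  · intro i
    rcases Nat.eq_zero_or_pos i.val with h0 | hpos
    · exact ⟨Sum.inl 0, Fin.ext h0.symm⟩
    · refine ⟨Sum.inr ⟨i.val - 1, by have := i.isLt; omega⟩, Fin.ext ?_⟩
      simp only [cED, Sum.elim_inr]
      rw [Nat.mod_eq_of_lt (by have := i.isLt; omega)]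
      omega
  · rintro (a | a) (b | b) hadj <;> simp_all [cED, Fin.ext_iff]
  · rintro (a | a)
    · refine ⟨1, ?_⟩
      rintro (b | b) hb
      · exfalso
        have := congrArg Fin.val hb
        simp [cED, Fin.val_one] at this
      · right; simp
    · refine ⟨0, ?_⟩
      rintro (b | b) hb
      · right; simp
      · exfalso
        have := congrArg Fin.val hb
        simp [cED] at this
  · intro i j
    have h1 := cED_card_ub k hk i
    have h2 := cED_card_lb k hk j
    omega

lemma no_small_edc (k m : ℕ) (hk : 1 ≤ k) (hm : m ≤ k + 1)
    (c : (Fin 2 ⊕ Fin (3 * k + 1)) → Fin m)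
    (hc : IsEquitableDominatorColoring (completeBipartiteGraph (Fin 2) (Fin (3 * k + 1))) m c) :
    False := by
  classical
  obtain ⟨hsurj, hprop, hdom, hequit⟩ := hc
  set N : Fin m → ℕ := fun i => (Finset.univ.filter fun v => c v = i).card with hN
  have hequitN : ∀ i j : Fin m, N i ≤ N j + 1 := hequit
  have hsum : ∑ i, N i = 3 * k + 3 := by
    have := Finset.card_eq_sum_card_fiberwise
      (f := c) (s := (Finset.univ : Finset (Fin 2 ⊕ Fin (3 * k + 1))))
      (t := (Finset.univ : Finset (Fin m))) (fun x _ => Finset.mem_univ _)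
    rw [← this]
    simp [Fintype.card_sum]
    omega
  have hm1 : 1 ≤ m := by
    by_contra h
    have : m = 0 := by omega
    subst this
    exact (c (Sum.inl 0)).elim0
  -- every class has at least two elements
  have h2 : ∀ i : Fin m, 2 ≤ N i := by
    intro i
    by_contra h
    have hb : ∀ j : Fin m, N j ≤ 2 := fun j => by
      have := hequitN j i; omega
    have : ∑ j, N j ≤ (Finset.univ : Finset (Fin m)).card • 2 :=
      Finset.sum_le_card_nsmul _ _ _ (fun j _ => hb j)
    simp at this
    omega
  -- the class dominated by a right vertex
  obtain ⟨i, hi⟩ := hdom (Sum.inr ⟨0, by omega⟩)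
  -- no right vertex has color i
  have hnoright : ∀ b : Fin (3 * k + 1), c (Sum.inr b) ≠ i := by
    have hright0 : c (Sum.inr ⟨0, by omega⟩) ≠ i := by
      intro h0
      -- class i has 2 elements, so contains some u ≠ inr 0
      have hcard : 1 < N i := h2 i
      rw [hN] at hcard
      rw [Finset.one_lt_card] at hcard
      obtain ⟨u, hu, w, hw, huw⟩ := hcard
      simp only [Finset.mem_filter, Finset.mem_univ, true_and] at hu hw
      have key : ∀ x : Fin 2 ⊕ Fin (3 * k + 1), c x = i →
          x ≠ Sum.inr ⟨0, by omega⟩ → False := by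
        intro x hx hne
        rcases hi x hx with h | h
        · exact hne h
        · exact hprop h (by rw [h0, hx])
      by_cases hne : u = Sum.inr ⟨0, by omega⟩
      · exact key w hw (fun h => huw (hne.trans h.symm))
      · exact key u hu hne
    intro b hb
    rcases hi _ hb with h | h
    · rw [Sum.inr.injEq] at h
      exact hright0 (h ▸ hb)
    · simp at h
  -- hence class i ⊆ {inl 0, inl 1} and N i = 2
  have hNi : N i ≤ 2 := by
    have hsub : (Finset.univ.filter fun v => c v = i) ⊆
        ({Sum.inl 0, Sum.inl 1} : Finset (Fin 2 ⊕ Fin (3 * k + 1))) := by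
      intro u hu
      simp only [Finset.mem_filter, Finset.mem_univ, true_and] at hu
      rcases u with a | b
      · fin_cases a <;> simp
      · exact absurd hu (hnoright b)
    have hle : ({Sum.inl 0, Sum.inl 1} : Finset (Fin 2 ⊕ Fin (3 * k + 1))).card ≤ 2 := by
      apply le_trans (Finset.card_insert_le _ _); simp
    exact le_trans (Finset.card_le_card hsub) hle
  have hNi2 : N i = 2 := le_antisymm hNi (h2 i)
  -- counting the remaining classes
  have herase : ∑ j ∈ Finset.univ.erase i, N j = 3 * k + 1 := by
    have := Finset.add_sum_erase Finset.univ N (Finset.mem_univ i)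
    omega
  have hub : ∑ j ∈ Finset.univ.erase i, N j ≤ (m - 1) * 3 := by
    have : ∑ j ∈ Finset.univ.erase i, N j ≤ (Finset.univ.erase i).card • 3 := by
      apply Finset.sum_le_card_nsmul
      intro j hj
      have := hequitN j i
      omega
    rw [Finset.card_erase_of_mem (Finset.mem_univ i)] at this
    simpa using this
  have : (m - 1) * 3 ≤ k * 3 := by
    apply Nat.mul_le_mul_right
    omega
  omega

lemma dom_two (k : ℕ) :
    domChromaticNumber (completeBipartiteGraph (Fin 2) (Fin (3 * k + 1))) = 2 := by
  have hmem : (2 : ℕ) ∈ {m | ∃ c : (Fin 2 ⊕ Fin (3*k+1)) → Fin m,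
      IsDominatorColoring (completeBipartiteGraph (Fin 2) (Fin (3*k+1))) m c} := by
    refine ⟨Sum.elim (fun _ => 0) (fun _ => 1), ?_, ?_, ?_⟩
    · intro i
      fin_cases i
      · exact ⟨Sum.inl 0, rfl⟩
      · exact ⟨Sum.inr ⟨0, by omega⟩, rfl⟩
    · rintro (a | a) (b | b) hadj <;> simp_all
    · rintro (a | a)
      · refine ⟨1, ?_⟩
        rintro (b | b) hb <;> simp_all
      · refine ⟨0, ?_⟩
        rintro (b | b) hb <;> simp_all
  refine le_antisymm (Nat.sInf_le hmem) ?_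
  refine le_csInf ⟨2, hmem⟩ ?_
  rintro m ⟨c, hsurj, hprop, -⟩
  by_contra h
  interval_cases m
  · exact (c (Sum.inl 0)).elim0
  · exact hprop (u := Sum.inl 0) (v := Sum.inr ⟨0, by omega⟩) (by simp) (Subsingleton.elim _ _)

lemma ed_eq (k : ℕ) (hk : 1 ≤ k) :
    edChromaticNumber (completeBipartiteGraph (Fin 2) (Fin (3 * k + 1))) = k + 2 := by
  have hmem : (k + 2 : ℕ) ∈ {m | ∃ c : (Fin 2 ⊕ Fin (3*k+1)) → Fin m,
      IsEquitableDominatorColoring (completeBipartiteGraph (Fin 2) (Fin (3*k+1))) m c} :=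
    ⟨cED k, cED_is_edc k hk⟩
  refine le_antisymm (Nat.sInf_le hmem) ?_
  refine le_csInf ⟨k + 2, hmem⟩ ?_
  rintro m ⟨c, hc⟩
  by_contra h
  exact no_small_edc k m hk (by omega) c hc


theorem exists_edChromaticNumber_sub_domChromaticNumber (k : ℕ) (hk : 1 ≤ k) :
    (∃ (V : Type) (_ : Fintype V) (G : SimpleGraph V),
      edChromaticNumber G - domChromaticNumber G = k) ∧
    domChromaticNumber (completeBipartiteGraph (Fin 2) (Fin (3 * k + 1))) = 2 ∧
    edChromaticNumber (completeBipartiteGraph (Fin 2) (Fin (3 * k + 1))) = k + 2 := by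
  constructor
  · exact ⟨Fin 2 ⊕ Fin (3 * k + 1), inferInstance,
      completeBipartiteGraph (Fin 2) (Fin (3 * k + 1)),
      by rw [dom_two k, ed_eq k hk]; omega⟩
  · exact ⟨dom_two k, ed_eq k hk⟩
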